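/- arXiv:math/0412125 — 6 statements merged into one kernel-verified Lean document; each statement's English description precedes it below -/
import Mathlib

section
/- Let f : ℍ → ℍ be C¹ on a neighborhood of a point p = t + r·ι(α,β) with r > 0 and sin β ≠ 0, and define g(t,r,α,β) = f(t + r·ι(α,β)). Then ∂g/∂t + ι(α,β)·∂g/∂r − r⁻¹·ι_α⁻¹·∂g/∂α − r⁻¹·ι_β⁻¹·∂g/∂β = ∂f/∂t + i·∂f/∂x + j·∂f/∂y + k·∂f/∂z evaluated at p; that is, the spherical-coordinate form of the operator coincides exactly with the left Fueter operator. -/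
open Quaternion

noncomputable section

/-- The quaternionic imaginary units. -/
def qI : ℍ[ℝ] := ⟨0, 1, 0, 0⟩
def qJ : ℍ[ℝ] := ⟨0, 0, 1, 0⟩
def qK : ℍ[ℝ] := ⟨0, 0, 0, 1⟩

/-- `ι(p) = Im p / |Im p|`. -/
def iota (p : ℍ[ℝ]) : ℍ[ℝ] := (‖p.im‖)⁻¹ • p.im

/-- The left Fueter operator `∂f/∂_l p̄`. -/
def fueterL (f : ℍ[ℝ] → ℍ[ℝ]) (p : ℍ[ℝ]) : ℍ[ℝ] :=
  fderiv ℝ f p 1 + qI * fderiv ℝ f p qI + qJ * fderiv ℝ f p qJ + qK * fderiv ℝ f p qK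

/-- The right Fueter operator `∂f/∂_r p̄`. -/
def fueterR (f : ℍ[ℝ] → ℍ[ℝ]) (p : ℍ[ℝ]) : ℍ[ℝ] :=
  fderiv ℝ f p 1 + fderiv ℝ f p qI * qI + fderiv ℝ f p qJ * qJ + fderiv ℝ f p qK * qK

/-- Spherical parametrization of the imaginary unit sphere. -/
def sph (α β : ℝ) : ℍ[ℝ] :=
  ⟨0, Real.cos α * Real.sin β, Real.sin α * Real.sin β, Real.cos β⟩

/-- `∂ι/∂α`. -/
def sphA (α β : ℝ) : ℍ[ℝ] :=
  ⟨0, -(Real.sin α * Real.sin β), Real.cos α * Real.sin β, 0⟩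

/-- `∂ι/∂β`. -/
def sphB (α β : ℝ) : ℍ[ℝ] :=
  ⟨0, Real.cos α * Real.cos β, Real.sin α * Real.cos β, -Real.sin β⟩

/-- Complex Extrinsic on ω. -/
def IsCE (f : ℍ[ℝ] → ℍ[ℝ]) (ω : Set ℍ[ℝ]) : Prop := ∀ p ∈ ω, f p * p = p * f p

/-- Class I : C¹, CE and `∂f/∂t + ι ∂f/∂r = 0`. -/
def IsClassI (f : ℍ[ℝ] → ℍ[ℝ]) (ω : Set ℍ[ℝ]) : Prop :=
  ContDiffOn ℝ 1 f ω ∧ IsCE f ω ∧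
  ∀ p ∈ ω, fderiv ℝ f p 1 + iota p * fderiv ℝ f p (iota p) = 0

/-- Class II with an explicit decomposition `f = u + ι v`. -/
def IsClassIIWith (f : ℍ[ℝ] → ℍ[ℝ]) (u v : ℍ[ℝ] → ℝ) (ω : Set ℍ[ℝ]) : Prop :=
  ContDiffOn ℝ 1 f ω ∧
  (∀ p ∈ ω, f p = (u p : ℍ[ℝ]) + (v p : ℍ[ℝ]) * iota p) ∧
  ∀ p ∈ ω, fueterL f p = ((-2 * v p / ‖p.im‖ : ℝ) : ℍ[ℝ])

/-- (left-) Class II. -/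
def IsClassII (f : ℍ[ℝ] → ℍ[ℝ]) (ω : Set ℍ[ℝ]) : Prop := ∃ u v, IsClassIIWith f u v ω

/-- right-Class II with an explicit decomposition. -/
def IsClassIIRWith (f : ℍ[ℝ] → ℍ[ℝ]) (u v : ℍ[ℝ] → ℝ) (ω : Set ℍ[ℝ]) : Prop :=
  ContDiffOn ℝ 1 f ω ∧
  (∀ p ∈ ω, f p = (u p : ℍ[ℝ]) + (v p : ℍ[ℝ]) * iota p) ∧
  ∀ p ∈ ω, fueterR f p = ((-2 * v p / ‖p.im‖ : ℝ) : ℍ[ℝ])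

/-- right-Class II. -/
def IsClassIIR (f : ℍ[ℝ] → ℍ[ℝ]) (ω : Set ℍ[ℝ]) : Prop := ∃ u v, IsClassIIRWith f u v ω

/-- Complex Intrinsic : `u`, `v` depend only on `(t, r)`. -/
def IsCI (f : ℍ[ℝ] → ℍ[ℝ]) (ω : Set ℍ[ℝ]) : Prop :=
  ∃ ut vt : ℝ → ℝ → ℝ, ∀ p ∈ ω,
    f p = (ut p.re ‖p.im‖ : ℍ[ℝ]) + (vt p.re ‖p.im‖ : ℍ[ℝ]) * iota p

/-- Class III : Class I and CI. -/
def IsClassIII (f : ℍ[ℝ] → ℍ[ℝ]) (ω : Set ℍ[ℝ]) : Prop := IsClassI f ω ∧ IsCI f ω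


lemma aux_sph_eq (α β : ℝ) : sph α β =
    (Real.cos α * Real.sin β) • qI + (Real.sin α * Real.sin β) • qJ + Real.cos β • qK := by
  simp [Quaternion.ext_iff, Quaternion.re_smul, Quaternion.re_mul, Quaternion.imI_mul, Quaternion.imJ_mul, Quaternion.imK_mul]
  simp [sph, qI, qJ, qK]

lemma aux_sphA_eq (α β : ℝ) : sphA α β =
    (-(Real.sin α * Real.sin β)) • qI + (Real.cos α * Real.sin β) • qJ := by
  simp [Quaternion.ext_iff, Quaternion.re_smul, Quaternion.re_mul, Quaternion.imI_mul, Quaternion.imJ_mul, Quaternion.imK_mul]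
  simp [sphA, qI, qJ]

lemma aux_sphB_eq (α β : ℝ) : sphB α β =
    (Real.cos α * Real.cos β) • qI + (Real.sin α * Real.cos β) • qJ + (-Real.sin β) • qK := by
  simp [Quaternion.ext_iff, Quaternion.re_smul, Quaternion.re_mul, Quaternion.imI_mul, Quaternion.imJ_mul, Quaternion.imK_mul]
  simp [sphB, qI, qJ, qK]

lemma aux_sphA_inv (α β : ℝ) (hβ : Real.sin β ≠ 0) :
    (sphA α β)⁻¹ = (Real.sin β ^ 2)⁻¹ • (-sphA α β) := by
  refine inv_eq_of_mul_eq_one_right ?_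
  have h1 := Real.sin_sq_add_cos_sq α
  simp [Quaternion.ext_iff, Quaternion.re_smul, Quaternion.re_mul, Quaternion.imI_mul, Quaternion.imJ_mul, Quaternion.imK_mul]
  simp [sphA]
  refine ⟨?_, Or.inr (by ring)⟩
  field_simp
  linear_combination h1

lemma aux_sphB_inv (α β : ℝ) : (sphB α β)⁻¹ = -sphB α β := by
  refine inv_eq_of_mul_eq_one_right ?_
  have h1 := Real.sin_sq_add_cos_sq α
  have h2 := Real.sin_sq_add_cos_sq β
  simp [Quaternion.ext_iff, Quaternion.re_smul, Quaternion.re_mul, Quaternion.imI_mul, Quaternion.imJ_mul, Quaternion.imK_mul]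
  simp [sphB]
  refine ⟨?_, by ring, by ring, by ring⟩
  linear_combination (Real.cos β ^ 2) * h1 + h2

lemma aux_h1 (α β : ℝ) (hβ : Real.sin β ≠ 0) :
    (Real.cos α * Real.sin β) • sph α β
      + ((Real.sin β ^ 2)⁻¹ * (-(Real.sin α * Real.sin β))) • sphA α β
      + (Real.cos α * Real.cos β) • sphB α β = qI := by
  have h1 := Real.sin_sq_add_cos_sq α
  have h2 := Real.sin_sq_add_cos_sq β
  simp [Quaternion.ext_iff, Quaternion.re_smul, Quaternion.re_mul, Quaternion.imI_mul, Quaternion.imJ_mul, Quaternion.imK_mul]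
  simp [sph, sphA, sphB, qI]
  refine ⟨?_, ?_, by ring⟩
  · field_simp
    linear_combination (Real.cos α ^ 2) * h2 + h1
  · field_simp
    linear_combination (Real.cos α * Real.sin α) * h2

lemma aux_h2 (α β : ℝ) (hβ : Real.sin β ≠ 0) :
    (Real.sin α * Real.sin β) • sph α β
      + ((Real.sin β ^ 2)⁻¹ * (Real.cos α * Real.sin β)) • sphA α β
      + (Real.sin α * Real.cos β) • sphB α β = qJ := by
  have h1 := Real.sin_sq_add_cos_sq α
  have h2 := Real.sin_sq_add_cos_sq β
  simp [Quaternion.ext_iff, Quaternion.re_smul, Quaternion.re_mul, Quaternion.imI_mul, Quaternion.imJ_mul, Quaternion.imK_mul]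
  simp [sph, sphA, sphB, qJ]
  refine ⟨?_, ?_, by ring⟩
  · field_simp
    linear_combination (Real.cos α * Real.sin α) * h2
  · field_simp
    linear_combination (Real.sin α ^ 2) * h2 + h1

lemma aux_h3 (α β : ℝ) :
    Real.cos β • sph α β + (-Real.sin β) • sphB α β = qK := by
  have h2 := Real.sin_sq_add_cos_sq β
  simp [Quaternion.ext_iff, Quaternion.re_smul, Quaternion.re_mul, Quaternion.imI_mul, Quaternion.imJ_mul, Quaternion.imK_mul]
  simp [sph, sphB, qK]
  refine ⟨by ring, by ring, by linear_combination h2⟩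


set_option maxHeartbeats 1000000 in
/-- the spherical form of the Fueter operator coincides with it. -/
theorem stmt2 (f : ℍ[ℝ] → ℍ[ℝ]) (t r α β : ℝ) (hr : 0 < r) (hβ : Real.sin β ≠ 0)
    (hf : ContDiffAt ℝ 1 f ((t : ℍ[ℝ]) + r • sph α β)) :
    deriv (fun s : ℝ => f ((s : ℍ[ℝ]) + r • sph α β)) t
      + sph α β * deriv (fun s : ℝ => f ((t : ℍ[ℝ]) + s • sph α β)) r
      - r⁻¹ • ((sphA α β)⁻¹ * deriv (fun s : ℝ => f ((t : ℍ[ℝ]) + r • sph s β)) α)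
      - r⁻¹ • ((sphB α β)⁻¹ * deriv (fun s : ℝ => f ((t : ℍ[ℝ]) + r • sph α s)) β)
    = fueterL f ((t : ℍ[ℝ]) + r • sph α β) := by
  set p : ℍ[ℝ] := (t : ℍ[ℝ]) + r • sph α β with hp
  have hdf : DifferentiableAt ℝ f p := hf.differentiableAt one_ne_zero
  set L := fderiv ℝ f p with hLdef
  have hcoe : HasDerivAt (fun s : ℝ => (s : ℍ[ℝ])) 1 t := by
    have h : (fun s : ℝ => (s : ℍ[ℝ])) = fun s : ℝ => s • (1 : ℍ[ℝ]) := by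
      ext s : 1; simp [Quaternion.ext_iff]
    rw [h]; simpa using (hasDerivAt_id t).smul_const (1 : ℍ[ℝ])
  have hc1 : HasDerivAt (fun s : ℝ => ((s : ℍ[ℝ]) + r • sph α β)) 1 t :=
    hcoe.add_const _
  have hc2 : HasDerivAt (fun s : ℝ => ((t : ℍ[ℝ]) + s • sph α β)) (sph α β) r := by
    simpa using ((hasDerivAt_id r).smul_const (sph α β)).const_add ((t : ℍ[ℝ]))
  have hcA : HasDerivAt (fun s : ℝ => sph s β) (sphA α β) α := by
    have h1 : (fun s : ℝ => sph s β) = fun s : ℝ =>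
        (Real.cos s * Real.sin β) • qI + (Real.sin s * Real.sin β) • qJ + Real.cos β • qK := by
      ext s : 1; exact aux_sph_eq s β
    rw [h1]
    have := ((((Real.hasDerivAt_cos α).mul_const (Real.sin β)).smul_const qI).add
      (((Real.hasDerivAt_sin α).mul_const (Real.sin β)).smul_const qJ)).add
      ((hasDerivAt_const α (Real.cos β)).smul_const qK)
    refine this.congr_deriv ?_
    ext <;> simp [Quaternion.re_smul] <;> simp [sphA, qI, qJ, qK]
  have hcB : HasDerivAt (fun s : ℝ => sph α s) (sphB α β) β := by
    have h1 : (fun s : ℝ => sph α s) = fun s : ℝ =>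
        (Real.cos α * Real.sin s) • qI + (Real.sin α * Real.sin s) • qJ + Real.cos s • qK := by
      ext s : 1; exact aux_sph_eq α s
    rw [h1]
    have := (((((Real.hasDerivAt_sin β).const_mul (Real.cos α)).smul_const qI).add
      ((((Real.hasDerivAt_sin β).const_mul (Real.sin α))).smul_const qJ)).add
      ((Real.hasDerivAt_cos β).smul_const qK))
    refine this.congr_deriv ?_
    ext <;> simp [Quaternion.re_smul] <;> simp [sphB, qI, qJ, qK, mul_comm]
  have hc3 : HasDerivAt (fun s : ℝ => ((t : ℍ[ℝ]) + r • sph s β)) (r • sphA α β) α :=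
    (hcA.const_smul r).const_add _
  have hc4 : HasDerivAt (fun s : ℝ => ((t : ℍ[ℝ]) + r • sph α s)) (r • sphB α β) β :=
    (hcB.const_smul r).const_add _
  have hd1 : deriv (fun s : ℝ => f ((s : ℍ[ℝ]) + r • sph α β)) t = L 1 :=
    (hdf.hasFDerivAt.comp_hasDerivAt t hc1).deriv
  have hd2 : deriv (fun s : ℝ => f ((t : ℍ[ℝ]) + s • sph α β)) r = L (sph α β) :=
    (hdf.hasFDerivAt.comp_hasDerivAt r hc2).deriv
  have hd3 : deriv (fun s : ℝ => f ((t : ℍ[ℝ]) + r • sph s β)) α = r • L (sphA α β) :=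
    ((hdf.hasFDerivAt.comp_hasDerivAt α hc3).deriv).trans (L.map_smul r _)
  have hd4 : deriv (fun s : ℝ => f ((t : ℍ[ℝ]) + r • sph α s)) β = r • L (sphB α β) :=
    ((hdf.hasFDerivAt.comp_hasDerivAt β hc4).deriv).trans (L.map_smul r _)
  rw [hd1, hd2, hd3, hd4]
  have hrr : r⁻¹ * r = 1 := inv_mul_cancel₀ hr.ne'
  rw [mul_smul_comm, mul_smul_comm, smul_smul, smul_smul, hrr, one_smul, one_smul]
  have hLs : L (sph α β) = (Real.cos α * Real.sin β) • L qI + (Real.sin α * Real.sin β) • L qJ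
      + Real.cos β • L qK := by rw [aux_sph_eq]; simp
  have hLA : L (sphA α β) = (-(Real.sin α * Real.sin β)) • L qI
      + (Real.cos α * Real.sin β) • L qJ := by rw [aux_sphA_eq]; simp
  have hLB : L (sphB α β) = (Real.cos α * Real.cos β) • L qI + (Real.sin α * Real.cos β) • L qJ
      + (-Real.sin β) • L qK := by rw [aux_sphB_eq]; simp
  rw [hLs, hLA, hLB, aux_sphA_inv α β hβ, aux_sphB_inv α β]
  show _ = L 1 + qI * L qI + qJ * L qJ + qK * L qK
  rw [← aux_h1 α β hβ, ← aux_h2 α β hβ, ← aux_h3 α β]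
  simp only [add_mul, smul_mul_assoc, mul_add, mul_smul_comm, smul_smul, smul_add, neg_mul,
    mul_neg, smul_neg, neg_smul, neg_neg, sub_eq_add_neg, neg_add]
  module


end
end

section
/- Let f and g both be of Class I on an open set ω ⊆ ℍ with ω ∩ ℝ = ∅. Then f(p)g(p) = g(p)f(p) for all p ∈ ω, the product fg and the sum f + g are of Class I on ω, and if f(p) ≠ 0 for all p ∈ ω then the pointwise quaternionic inverse p ↦ f(p)⁻¹ is of Class I on ω. -/
open Quaternion

noncomputable section

set_option linter.unreachableTactic false
set_option linter.unusedTactic false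

lemma im_parallel (p a : ℍ[ℝ]) (hp : p.im ≠ 0) (ha : a * p = p * a) :
    ∃ s : ℝ, a.im = s • p.im := by
  have h1 := congrArg QuaternionAlgebra.imI ha
  have h2 := congrArg QuaternionAlgebra.imJ ha
  have h3 := congrArg QuaternionAlgebra.imK ha
  simp only [Quaternion.imI_mul, Quaternion.imJ_mul, Quaternion.imK_mul] at h1 h2 h3
  have hp' : ¬ (p.imI = 0 ∧ p.imJ = 0 ∧ p.imK = 0) := by
    intro ⟨hx, hy, hz⟩
    exact hp (by ext <;> simp [hx, hy, hz])
  have c1 : a.imJ * p.imK = a.imK * p.imJ := by linarith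
  have c2 : a.imK * p.imI = a.imI * p.imK := by linarith
  have c3 : a.imI * p.imJ = a.imJ * p.imI := by linarith
  rcases (not_and_or.mp hp') with hx | h
  · refine ⟨a.imI / p.imI, ?_⟩
    ext <;> simp <;> field_simp <;> nlinarith [c2, c3]
  rcases (not_and_or.mp h) with hy | hz
  · refine ⟨a.imJ / p.imJ, ?_⟩
    ext <;> simp <;> field_simp <;> nlinarith [c1, c3]
  · refine ⟨a.imK / p.imK, ?_⟩
    ext <;> simp <;> field_simp <;> nlinarith [c1, c2]

lemma commute_vals (p a b : ℍ[ℝ]) (hp : p.im ≠ 0) (ha : a * p = p * a)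
    (hb : b * p = p * b) : a * b = b * a := by
  obtain ⟨s, hs⟩ := im_parallel p a hp ha
  obtain ⟨t, ht⟩ := im_parallel p b hp hb
  have h2 : Commute a.im b.im := by
    rw [hs, ht]; exact ((Commute.refl p.im).smul_right t).smul_left s
  have h3 : Commute a.im b := by
    rw [← b.re_add_im]
    exact ((Quaternion.coe_commute b.re a.im).symm).add_right h2
  have : Commute a b := by
    rw [← a.re_add_im]; exact (Quaternion.coe_commute a.re b).add_left h3
  exact this

lemma commute_iota {p a : ℍ[ℝ]} (ha : a * p = p * a) : a * iota p = iota p * a := by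
  have hap : Commute a p := ha
  have him : Commute a p.im := by
    rw [← p.sub_re_self]
    exact hap.sub_right (Quaternion.coe_commute p.re a).symm
  exact him.smul_right (‖p.im‖)⁻¹

/-- Class I functions commute and are closed under product, sum
and pointwise inverse. -/
theorem stmt3 (ω : Set ℍ[ℝ]) (hω : IsOpen ω) (hIm : ∀ p ∈ ω, p.im ≠ 0)
    (f g : ℍ[ℝ] → ℍ[ℝ]) (hf : IsClassI f ω) (hg : IsClassI g ω) :
    (∀ p ∈ ω, f p * g p = g p * f p) ∧
    IsClassI (fun p => f p * g p) ω ∧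
    IsClassI (fun p => f p + g p) ω ∧
    ((∀ p ∈ ω, f p ≠ 0) → IsClassI (fun p => (f p)⁻¹) ω) := by
  obtain ⟨hfc, hfce, hfd⟩ := hf
  obtain ⟨hgc, hgce, hgd⟩ := hg
  have hdiffF : ∀ p ∈ ω, DifferentiableAt ℝ f p := fun p hp =>
    (hfc.contDiffAt (hω.mem_nhds hp)).differentiableAt one_ne_zero
  have hdiffG : ∀ p ∈ ω, DifferentiableAt ℝ g p := fun p hp =>
    (hgc.contDiffAt (hω.mem_nhds hp)).differentiableAt one_ne_zero
  have comm_fg : ∀ p ∈ ω, f p * g p = g p * f p := fun p hp =>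
    commute_vals p (f p) (g p) (hIm p hp) (hfce p hp) (hgce p hp)
  refine ⟨comm_fg, ⟨hfc.mul hgc, ?_, ?_⟩, ⟨hfc.add hgc, ?_, ?_⟩, ?_⟩
  · -- CE for product
    intro p hp
    calc f p * g p * p = f p * (p * g p) := by rw [mul_assoc, hgce p hp]
      _ = p * (f p * g p) := by rw [← mul_assoc, hfce p hp, mul_assoc]
  · -- PDE for product
    intro p hp
    have hD : fderiv ℝ (fun q => f q * g q) p
        = f p • fderiv ℝ g p + (fderiv ℝ f p).smulRight (g p) :=
      ((hdiffF p hp).hasFDerivAt.mul' (hdiffG p hp).hasFDerivAt).fderiv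
    have hev : ∀ w, fderiv ℝ (fun q => f q * g q) p w
        = f p * fderiv ℝ g p w + fderiv ℝ f p w * g p := by
      intro w; rw [hD]; simp [smul_eq_mul]
    set i := iota p with hi
    have hcfi : f p * i = i * f p := commute_iota (hfce p hp)
    have key : i * (f p * fderiv ℝ g p i) = f p * (i * fderiv ℝ g p i) := by
      rw [← mul_assoc, ← hcfi, mul_assoc]
    rw [hev 1, hev i]
    have hA := hfd p hp; have hC := hgd p hp
    calc f p * fderiv ℝ g p 1 + fderiv ℝ f p 1 * g p
          + i * (f p * fderiv ℝ g p i + fderiv ℝ f p i * g p)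
        = f p * (fderiv ℝ g p 1 + i * fderiv ℝ g p i)
          + (fderiv ℝ f p 1 + i * fderiv ℝ f p i) * g p := by
          simp only [mul_add, add_mul, key, mul_assoc]; abel
      _ = 0 := by rw [hA, hC]; simp
  · -- CE for sum
    intro p hp
    simp only [add_mul, mul_add, hfce p hp, hgce p hp]
  · -- PDE for sum
    intro p hp
    have hD : fderiv ℝ (fun q => f q + g q) p = fderiv ℝ f p + fderiv ℝ g p :=
      fderiv_add (hdiffF p hp) (hdiffG p hp)
    have hA := hfd p hp; have hC := hgd p hp
    rw [hD]
    simp only [ContinuousLinearMap.add_apply, mul_add]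
    calc fderiv ℝ f p 1 + fderiv ℝ g p 1
          + (iota p * fderiv ℝ f p (iota p) + iota p * fderiv ℝ g p (iota p))
        = (fderiv ℝ f p 1 + iota p * fderiv ℝ f p (iota p))
          + (fderiv ℝ g p 1 + iota p * fderiv ℝ g p (iota p)) := by abel
      _ = 0 := by rw [hA, hC]; simp
  · -- inverse
    intro hne
    have hinvD : ∀ p ∈ ω, HasFDerivAt (fun q => (f q)⁻¹)
        ((-(ContinuousLinearMap.mulLeftRight ℝ ℍ[ℝ] (f p)⁻¹ (f p)⁻¹)).comp (fderiv ℝ f p)) p := by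
      intro p hp
      set u : ℍ[ℝ]ˣ := Units.mk0 (f p) (hne p hp) with hu
      have h1 := hasFDerivAt_ringInverse (𝕜 := ℝ) u
      have h2 := h1.comp p (hdiffF p hp).hasFDerivAt
      have h3 : (Ring.inverse ∘ f) = fun q => (f q)⁻¹ := by
        funext q; simp [Function.comp, Ring.inverse_eq_inv']
      rw [h3] at h2
      exact h2.congr_fderiv (by simp [hu])
    refine ⟨?_, ?_, ?_⟩
    · intro p hp
      exact (((contDiffAt_ringInverse ℝ (Units.mk0 (f p) (hne p hp))).comp p
        (hfc.contDiffAt (hω.mem_nhds hp))).congr_of_eventuallyEq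
        (by filter_upwards with q using by simp [Function.comp, Ring.inverse_eq_inv'])).contDiffWithinAt
    · intro p hp
      have : Commute (f p) p := hfce p hp
      exact (this.inv_left₀ : Commute (f p)⁻¹ p)
    · intro p hp
      set i := iota p with hi
      set a := (f p)⁻¹ with haa
      have hev : ∀ w, fderiv ℝ (fun q => (f q)⁻¹) p w = -(a * fderiv ℝ f p w * a) := by
        intro w
        rw [(hinvD p hp).fderiv]
        simp [ContinuousLinearMap.mulLeftRight_apply, haa]
      have hcomm : a * i = i * a := by
        have hcm : Commute (f p) p := hfce p hp
        exact commute_iota hcm.inv_left₀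
      rw [hev 1, hev i]
      have hA := hfd p hp
      have key : i * (a * fderiv ℝ f p i * a) = a * (i * fderiv ℝ f p i) * a := by
        rw [← mul_assoc, ← mul_assoc, ← hcomm, mul_assoc a i _]
      rw [mul_neg, key]
      have : a * fderiv ℝ f p 1 * a + a * (i * fderiv ℝ f p i) * a
          = a * (fderiv ℝ f p 1 + i * fderiv ℝ f p i) * a := by
        rw [mul_add, add_mul]
      rw [← neg_add, this, hA]
      simp


end
end

section
/- Let f and g both be of Class II on an open set ω ⊆ ℍ with ω ∩ ℝ = ∅. Then f(p)g(p) = g(p)f(p) for all p ∈ ω, the product fg and the sum f + g are of Class II on ω, and if f(p) ≠ 0 for all p ∈ ω then the pointwise quaternionic inverse p ↦ f(p)⁻¹ is of Class II on ω. -/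
open Quaternion

noncomputable section

open scoped RealInnerProductSpace

def imL : ℍ[ℝ] →L[ℝ] ℍ[ℝ] :=
  { toFun := Quaternion.im
    map_add' := fun a b => by simp
    map_smul' := fun r a => by simp
    cont := Quaternion.continuous_im }

@[simp] lemma imL_apply (q : ℍ[ℝ]) : imL q = q.im := rfl

def iotaD (p : ℍ[ℝ]) : ℍ[ℝ] →L[ℝ] ℍ[ℝ] :=
  ‖p.im‖⁻¹ • imL - (((‖p.im‖^3)⁻¹ • ((innerSL ℝ p.im).comp imL)).smulRight p.im)

lemma iotaD_apply (p e : ℍ[ℝ]) :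
    iotaD p e = ‖p.im‖⁻¹ • e.im - ((‖p.im‖^3)⁻¹ * ⟪p.im, e.im⟫) • p.im := by
  simp [iotaD, smul_smul]

lemma hasFDerivAt_norm_im (p : ℍ[ℝ]) (hp : p.im ≠ 0) :
    HasFDerivAt (fun q : ℍ[ℝ] => ‖q.im‖) (‖p.im‖⁻¹ • ((innerSL ℝ p.im).comp imL)) p := by
  have hr : ‖p.im‖ ≠ 0 := norm_ne_zero_iff.mpr hp
  have h1 : HasFDerivAt (fun q : ℍ[ℝ] => ‖q.im‖^2) (2 • (innerSL ℝ (p.im)).comp imL) p :=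
    (imL.hasFDerivAt (x := p)).norm_sq
  have h2 : HasDerivAt Real.sqrt (1 / (2 * Real.sqrt (‖p.im‖^2))) (‖p.im‖^2) :=
    Real.hasDerivAt_sqrt (by positivity)
  have h3 := h2.comp_hasFDerivAt p h1
  have h4 : (fun q : ℍ[ℝ] => Real.sqrt (‖q.im‖^2)) = fun q : ℍ[ℝ] => ‖q.im‖ := by
    funext q; rw [Real.sqrt_sq (norm_nonneg _)]
  rw [Function.comp_def, h4] at h3
  refine h3.congr_fderiv ?_
  rw [Real.sqrt_sq (norm_nonneg _)]
  ext e
  simp [smul_smul]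
  field_simp

lemma hasFDerivAt_iota (p : ℍ[ℝ]) (hp : p.im ≠ 0) :
    HasFDerivAt iota (iotaD p) p := by
  have hr : ‖p.im‖ ≠ 0 := norm_ne_zero_iff.mpr hp
  have hn := hasFDerivAt_norm_im p hp
  have hinv := (hasDerivAt_inv hr).comp_hasFDerivAt p hn
  have h := HasFDerivAt.smul hinv (imL.hasFDerivAt (x := p))
  refine HasFDerivAt.congr_fderiv (f := iota) h ?_
  refine ContinuousLinearMap.ext fun e => ?_
  rw [iotaD_apply]
  simp only [ContinuousLinearMap.add_apply, ContinuousLinearMap.smul_apply,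
    ContinuousLinearMap.smulRight_apply, ContinuousLinearMap.coe_comp', Function.comp_apply,
    innerSL_apply_apply, imL_apply, Function.comp, smul_smul, sub_eq_add_neg, ← neg_smul]
  congr 1
  field_simp
  ring

lemma normsq_im (p : ℍ[ℝ]) : p.imI^2 + p.imJ^2 + p.imK^2 = ‖p.im‖^2 := by
  have h := Quaternion.normSq_eq_norm_mul_self (a := p.im)
  rw [Quaternion.normSq_def'] at h
  simp only [Quaternion.re_im, Quaternion.imI_im, Quaternion.imJ_im, Quaternion.imK_im] at h
  rw [← sq] at h
  linarith [h]

@[simp] lemma qI_re : qI.re = 0 := rfl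
@[simp] lemma qI_imI : qI.imI = 1 := rfl
@[simp] lemma qI_imJ : qI.imJ = 0 := rfl
@[simp] lemma qI_imK : qI.imK = 0 := rfl
@[simp] lemma qJ_re : qJ.re = 0 := rfl
@[simp] lemma qJ_imI : qJ.imI = 0 := rfl
@[simp] lemma qJ_imJ : qJ.imJ = 1 := rfl
@[simp] lemma qJ_imK : qJ.imK = 0 := rfl
@[simp] lemma qK_re : qK.re = 0 := rfl
@[simp] lemma qK_imI : qK.imI = 0 := rfl
@[simp] lemma qK_imJ : qK.imJ = 0 := rfl
@[simp] lemma qK_imK : qK.imK = 1 := rfl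

lemma fueter_iotaD (p : ℍ[ℝ]) (hp : p.im ≠ 0) :
    qI * iotaD p qI + qJ * iotaD p qJ + qK * iotaD p qK = ((-2 / ‖p.im‖ : ℝ) : ℍ[ℝ]) := by
  have hr : ‖p.im‖ ≠ 0 := norm_ne_zero_iff.mpr hp
  have h2 := normsq_im p
  rw [iotaD_apply, iotaD_apply, iotaD_apply]
  have hI : ⟪p.im, (qI : ℍ[ℝ]).im⟫ = p.imI := by
    simp [Quaternion.inner_def, Quaternion.re_mul]
  have hJ : ⟪p.im, (qJ : ℍ[ℝ]).im⟫ = p.imJ := by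
    simp [Quaternion.inner_def, Quaternion.re_mul]
  have hK : ⟪p.im, (qK : ℍ[ℝ]).im⟫ = p.imK := by
    simp [Quaternion.inner_def, Quaternion.re_mul]
  rw [hI, hJ, hK]
  have hc : ((-2 / ‖p.im‖ : ℝ) : ℍ[ℝ]) = ⟨-2 / ‖p.im‖, 0, 0, 0⟩ := rfl
  rw [hc]
  ext
  · simp [Quaternion.re_mul]
    field_simp
    nlinarith [normsq_im p]
  · simp [Quaternion.imI_mul]; ring
  · simp [Quaternion.imJ_mul]; ring
  · simp [Quaternion.imK_mul]; ring

lemma iotaD_one (p : ℍ[ℝ]) : iotaD p (1:ℍ[ℝ]) = 0 := by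
  rw [iotaD_apply]
  simp [Quaternion.im_coe (R := ℝ) 1]

lemma iota_mul_self (p : ℍ[ℝ]) (hp : p.im ≠ 0) : iota p * iota p = -1 := by
  have hr : ‖p.im‖ ≠ 0 := norm_ne_zero_iff.mpr hp
  have him : p.im * p.im = -((‖p.im‖^2 : ℝ) : ℍ[ℝ]) := by
    have := Quaternion.im_sq p
    rw [sq] at this
    rw [this, Quaternion.normSq_eq_norm_mul_self, ← sq]
  rw [iota, smul_mul_assoc, mul_smul_comm, smul_smul, him]
  rw [smul_neg, Quaternion.smul_coe]
  have h1 : (‖p.im‖⁻¹ * ‖p.im‖⁻¹ * ‖p.im‖^2 : ℝ) = 1 := by field_simp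
  rw [h1, Quaternion.coe_one]

def Dbar (a : ℍ[ℝ] → ℝ) (p : ℍ[ℝ]) : ℍ[ℝ] :=
  fderiv ℝ a p 1 • (1:ℍ[ℝ]) + fderiv ℝ a p qI • qI + fderiv ℝ a p qJ • qJ + fderiv ℝ a p qK • qK

lemma fueterL_decomp (p : ℍ[ℝ]) (hp : p.im ≠ 0) (a b : ℍ[ℝ] → ℝ)
    (ha : DifferentiableAt ℝ a p) (hb : DifferentiableAt ℝ b p) (f : ℍ[ℝ] → ℍ[ℝ])
    (hf : ∀ᶠ q in nhds p, f q = (a q : ℍ[ℝ]) + b q • iota q) :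
    fueterL f p = Dbar a p + Dbar b p * iota p + ((-2 * b p / ‖p.im‖ : ℝ) : ℍ[ℝ]) := by
  set A : ℍ[ℝ] →L[ℝ] ℍ[ℝ] :=
    (fderiv ℝ a p).smulRight ((1:ℝ) : ℍ[ℝ]) +
      (b p • iotaD p + (fderiv ℝ b p).smulRight (iota p)) with hA
  have hg : HasFDerivAt (fun q => (a q : ℍ[ℝ]) + b q • iota q) A p := by
    have h1 : HasFDerivAt (fun q => a q • ((1:ℝ) : ℍ[ℝ]))
        ((fderiv ℝ a p).smulRight ((1:ℝ):ℍ[ℝ])) p := ha.hasFDerivAt.smul_const _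
    have h2 := hb.hasFDerivAt.smul (hasFDerivAt_iota p hp)
    have := h1.add h2
    refine this.congr_of_eventuallyEq (Filter.Eventually.of_forall fun q => ?_)
    show (a q : ℍ[ℝ]) + b q • iota q = a q • ((1:ℝ):ℍ[ℝ]) + b q • iota q
    rw [Quaternion.smul_coe, mul_one]
  have hfd : fderiv ℝ f p = A := by
    rw [Filter.EventuallyEq.fderiv_eq hf, hg.fderiv]
  rw [fueterL, hfd]
  have happ : ∀ e : ℍ[ℝ], A e = fderiv ℝ a p e • ((1:ℝ):ℍ[ℝ]) + (b p • iotaD p e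
      + fderiv ℝ b p e • iota p) := by
    intro e; simp [hA]
  rw [happ, happ, happ, happ, iotaD_one, Quaternion.coe_one]
  have hbp : ((-2 * b p / ‖p.im‖ : ℝ) : ℍ[ℝ]) = b p • ((-2 / ‖p.im‖ : ℝ) : ℍ[ℝ]) := by
    rw [← Quaternion.coe_smul]
    congr 1
    rw [smul_eq_mul]
    ring
  rw [hbp, ← fueter_iotaD p hp, Dbar, Dbar]
  simp only [mul_add, mul_smul_comm, smul_zero, mul_one, one_mul, add_mul, smul_mul_assoc,
    smul_add]
  module


lemma Dbar_add (a b : ℍ[ℝ] → ℝ) (p : ℍ[ℝ]) (ha : DifferentiableAt ℝ a p)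
    (hb : DifferentiableAt ℝ b p) :
    Dbar (fun q => a q + b q) p = Dbar a p + Dbar b p := by
  simp only [Dbar, fderiv_fun_add ha hb, ContinuousLinearMap.add_apply]
  module

lemma Dbar_neg (a : ℍ[ℝ] → ℝ) (p : ℍ[ℝ]) :
    Dbar (fun q => -(a q)) p = -Dbar a p := by
  simp only [Dbar, fderiv_fun_neg, ContinuousLinearMap.neg_apply]
  module

lemma Dbar_mul (a b : ℍ[ℝ] → ℝ) (p : ℍ[ℝ]) (ha : DifferentiableAt ℝ a p)
    (hb : DifferentiableAt ℝ b p) :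
    Dbar (fun q => a q * b q) p = a p • Dbar b p + b p • Dbar a p := by
  simp only [Dbar, fderiv_fun_mul ha hb, ContinuousLinearMap.add_apply,
    ContinuousLinearMap.smul_apply, smul_eq_mul]
  module

lemma Dbar_inv (a : ℍ[ℝ] → ℝ) (p : ℍ[ℝ]) (ha : DifferentiableAt ℝ a p) (hp : a p ≠ 0) :
    Dbar (fun q => (a q)⁻¹) p = (-(a p ^ 2)⁻¹) • Dbar a p := by
  have h := ((hasDerivAt_inv hp).comp_hasFDerivAt p ha.hasFDerivAt).fderiv
  simp only [Function.comp_def] at h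
  simp only [Dbar, h, ContinuousLinearMap.smul_apply, smul_eq_mul]
  module

lemma Dbar_sub (a b : ℍ[ℝ] → ℝ) (p : ℍ[ℝ]) (ha : DifferentiableAt ℝ a p)
    (hb : DifferentiableAt ℝ b p) :
    Dbar (fun q => a q - b q) p = Dbar a p - Dbar b p := by
  simp only [sub_eq_add_neg]
  rw [Dbar_add a (fun q => -(b q)) p ha hb.neg, Dbar_neg]

lemma iota_re (p : ℍ[ℝ]) : (iota p).re = 0 := by
  simp [iota]

lemma coe_eq_smul_one (r : ℝ) : (r : ℍ[ℝ]) = r • (1 : ℍ[ℝ]) := by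
  rw [← Quaternion.coe_one, Quaternion.smul_coe, mul_one]

lemma mul_decomp (a b c d : ℝ) (x : ℍ[ℝ]) (hx : x * x = -1) :
    ((a : ℍ[ℝ]) + b • x) * ((c : ℍ[ℝ]) + d • x)
      = ((a * c - b * d : ℝ) : ℍ[ℝ]) + (a * d + b * c) • x := by
  simp only [coe_eq_smul_one, add_mul, mul_add, smul_mul_assoc, mul_smul_comm, smul_smul,
    one_mul, mul_one, hx, smul_neg]
  module

lemma comm_decomp (a b c d : ℝ) (x : ℍ[ℝ]) (hx : x * x = -1) :
    ((a : ℍ[ℝ]) + b • x) * ((c : ℍ[ℝ]) + d • x)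
      = ((c : ℍ[ℝ]) + d • x) * ((a : ℍ[ℝ]) + b • x) := by
  rw [mul_decomp a b c d x hx, mul_decomp c d a b x hx]
  rw [mul_comm c a, mul_comm d b, mul_comm d a, mul_comm c b, add_comm (b*c) (a*d)]

def reL : ℍ[ℝ] →L[ℝ] ℝ :=
  { toFun := QuaternionAlgebra.re
    map_add' := fun a b => by simp
    map_smul' := fun r a => by simp
    cont := Quaternion.continuous_re }

@[simp] lemma reL_apply (q : ℍ[ℝ]) : reL q = q.re := rfl

def Uc (f : ℍ[ℝ] → ℍ[ℝ]) : ℍ[ℝ] → ℝ := fun q => (f q).re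
def Vc (f : ℍ[ℝ] → ℍ[ℝ]) : ℍ[ℝ] → ℝ := fun q => -((f q) * iota q).re

lemma Uc_eq (f : ℍ[ℝ] → ℍ[ℝ]) (u v : ℍ[ℝ] → ℝ) (q : ℍ[ℝ])
    (hq : f q = (u q : ℍ[ℝ]) + (v q : ℍ[ℝ]) * iota q) : Uc f q = u q := by
  rw [Uc, hq, Quaternion.coe_mul_eq_smul]
  simp [iota_re]

lemma Vc_eq (f : ℍ[ℝ] → ℍ[ℝ]) (u v : ℍ[ℝ] → ℝ) (q : ℍ[ℝ]) (hq' : q.im ≠ 0)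
    (hq : f q = (u q : ℍ[ℝ]) + (v q : ℍ[ℝ]) * iota q) : Vc f q = v q := by
  rw [Vc, hq, Quaternion.coe_mul_eq_smul, add_mul, smul_mul_assoc,
    iota_mul_self q hq', Quaternion.coe_mul_eq_smul]
  simp [iota_re]

lemma Uc_diffAt (f : ℍ[ℝ] → ℍ[ℝ]) (p : ℍ[ℝ]) (hfd : DifferentiableAt ℝ f p) :
    DifferentiableAt ℝ (Uc f) p := reL.differentiableAt.comp p hfd

lemma Vc_diffAt (f : ℍ[ℝ] → ℍ[ℝ]) (p : ℍ[ℝ]) (hp : p.im ≠ 0)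
    (hfd : DifferentiableAt ℝ f p) : DifferentiableAt ℝ (Vc f) p := by
  have h1 : DifferentiableAt ℝ (fun q => f q * iota q) p :=
    hfd.mul (hasFDerivAt_iota p hp).differentiableAt
  exact (reL.differentiableAt.comp p h1).neg

lemma diffAt_of_contDiffOn (f : ℍ[ℝ] → ℍ[ℝ]) (ω : Set ℍ[ℝ]) (hω : IsOpen ω)
    (hf : ContDiffOn ℝ 1 f ω) (p : ℍ[ℝ]) (hp : p ∈ ω) : DifferentiableAt ℝ f p :=
  (hf.differentiableOn one_ne_zero).differentiableAt (hω.mem_nhds hp)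

lemma classII_key (f : ℍ[ℝ] → ℍ[ℝ]) (u v : ℍ[ℝ] → ℝ) (ω : Set ℍ[ℝ]) (hω : IsOpen ω)
    (hIm : ∀ p ∈ ω, p.im ≠ 0) (h : IsClassIIWith f u v ω) (p : ℍ[ℝ]) (hp : p ∈ ω) :
    Dbar (Uc f) p + Dbar (Vc f) p * iota p = 0 := by
  obtain ⟨hc, hd, hfu⟩ := h
  have hev : ∀ᶠ q in nhds p, f q = ((Uc f q : ℝ) : ℍ[ℝ]) + Vc f q • iota q := by
    filter_upwards [hω.mem_nhds hp] with q hq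
    rw [Uc_eq f u v q (hd q hq), Vc_eq f u v q (hIm q hq) (hd q hq), hd q hq,
      Quaternion.coe_mul_eq_smul]
  have hfd := diffAt_of_contDiffOn f ω hω hc p hp
  have h1 := fueterL_decomp p (hIm p hp) (Uc f) (Vc f) (Uc_diffAt f p hfd)
    (Vc_diffAt f p (hIm p hp) hfd) f hev
  rw [hfu p hp, Vc_eq f u v p (hIm p hp) (hd p hp)] at h1
  exact right_eq_add.mp h1

lemma fueterL_add (f g : ℍ[ℝ] → ℍ[ℝ]) (p : ℍ[ℝ]) (hf : DifferentiableAt ℝ f p)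
    (hg : DifferentiableAt ℝ g p) :
    fueterL (fun q => f q + g q) p = fueterL f p + fueterL g p := by
  simp only [fueterL, fderiv_fun_add hf hg, ContinuousLinearMap.add_apply, mul_add]
  abel

set_option maxHeartbeats 1000000 in
/-- Class II functions commute and are closed under product, sum
and pointwise inverse. -/
theorem stmt4 (ω : Set ℍ[ℝ]) (hω : IsOpen ω) (hIm : ∀ p ∈ ω, p.im ≠ 0)
    (f g : ℍ[ℝ] → ℍ[ℝ]) (hf : IsClassII f ω) (hg : IsClassII g ω) :
    (∀ p ∈ ω, f p * g p = g p * f p) ∧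
    IsClassII (fun p => f p * g p) ω ∧
    IsClassII (fun p => f p + g p) ω ∧
    ((∀ p ∈ ω, f p ≠ 0) → IsClassII (fun p => (f p)⁻¹) ω) := by
  obtain ⟨u₁, v₁, hf1⟩ := hf
  obtain ⟨u₂, v₂, hg1⟩ := hg
  have hK1 : ∀ p ∈ ω, Dbar (Uc f) p + Dbar (Vc f) p * iota p = 0 :=
    fun p hp => classII_key f u₁ v₁ ω hω hIm hf1 p hp
  have hK2 : ∀ p ∈ ω, Dbar (Uc g) p + Dbar (Vc g) p * iota p = 0 :=
    fun p hp => classII_key g u₂ v₂ ω hω hIm hg1 p hp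
  have hfd : ∀ p ∈ ω, DifferentiableAt ℝ f p :=
    fun p hp => diffAt_of_contDiffOn f ω hω hf1.1 p hp
  have hgd : ∀ p ∈ ω, DifferentiableAt ℝ g p :=
    fun p hp => diffAt_of_contDiffOn g ω hω hg1.1 p hp
  have hUf : ∀ p ∈ ω, f p = ((Uc f p : ℝ) : ℍ[ℝ]) + Vc f p • iota p := by
    intro p hp
    rw [Uc_eq f u₁ v₁ p (hf1.2.1 p hp), Vc_eq f u₁ v₁ p (hIm p hp) (hf1.2.1 p hp),
      hf1.2.1 p hp, Quaternion.coe_mul_eq_smul]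
  have hUg : ∀ p ∈ ω, g p = ((Uc g p : ℝ) : ℍ[ℝ]) + Vc g p • iota p := by
    intro p hp
    rw [Uc_eq g u₂ v₂ p (hg1.2.1 p hp), Vc_eq g u₂ v₂ p (hIm p hp) (hg1.2.1 p hp),
      hg1.2.1 p hp, Quaternion.coe_mul_eq_smul]
  have hι : ∀ p ∈ ω, iota p * iota p = -1 := fun p hp => iota_mul_self p (hIm p hp)
  have e1 : ∀ p ∈ ω, Dbar (Uc f) p = -(Dbar (Vc f) p * iota p) :=
    fun p hp => eq_neg_of_add_eq_zero_left (hK1 p hp)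
  have e2 : ∀ p ∈ ω, Dbar (Uc g) p = -(Dbar (Vc g) p * iota p) :=
    fun p hp => eq_neg_of_add_eq_zero_left (hK2 p hp)
  refine ⟨?_, ?_, ?_, ?_⟩
  · intro p hp
    rw [hUf p hp, hUg p hp]
    exact comm_decomp _ _ _ _ _ (hι p hp)
  · -- product
    refine ⟨fun q => Uc f q * Uc g q - Vc f q * Vc g q,
            fun q => Uc f q * Vc g q + Vc f q * Uc g q, hf1.1.mul hg1.1, ?_, ?_⟩
    · intro p hp
      beta_reduce
      rw [hUf p hp, hUg p hp, mul_decomp _ _ _ _ _ (hι p hp), Quaternion.coe_mul_eq_smul]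
    · intro p hp
      have hU1 := Uc_diffAt f p (hfd p hp)
      have hV1 := Vc_diffAt f p (hIm p hp) (hfd p hp)
      have hU2 := Uc_diffAt g p (hgd p hp)
      have hV2 := Vc_diffAt g p (hIm p hp) (hgd p hp)
      have hev : ∀ᶠ q in nhds p, f q * g q =
          ((Uc f q * Uc g q - Vc f q * Vc g q : ℝ) : ℍ[ℝ])
            + (Uc f q * Vc g q + Vc f q * Uc g q) • iota q := by
        filter_upwards [hω.mem_nhds hp] with q hq
        rw [hUf q hq, hUg q hq, mul_decomp _ _ _ _ _ (hι q hq)]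
      rw [fueterL_decomp p (hIm p hp) _ _ ((hU1.fun_mul hU2).fun_sub (hV1.fun_mul hV2))
        ((hU1.fun_mul hV2).fun_add (hV1.fun_mul hU2)) _ hev]
      have hz : Dbar (fun q => Uc f q * Uc g q - Vc f q * Vc g q) p
          + Dbar (fun q => Uc f q * Vc g q + Vc f q * Uc g q) p * iota p = 0 := by
        rw [Dbar_sub _ _ p (hU1.fun_mul hU2) (hV1.fun_mul hV2),
          Dbar_add _ _ p (hU1.fun_mul hV2) (hV1.fun_mul hU2),
          Dbar_mul _ _ p hU1 hU2, Dbar_mul _ _ p hV1 hV2,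
          Dbar_mul _ _ p hU1 hV2, Dbar_mul _ _ p hV1 hU2,
          e1 p hp, e2 p hp]
        simp only [smul_neg, add_mul, sub_mul, neg_mul, smul_mul_assoc, mul_assoc,
          hι p hp, mul_neg_one, mul_one, neg_neg]
        module
      rw [hz, zero_add]
  · -- sum
    refine ⟨fun q => Uc f q + Uc g q, fun q => Vc f q + Vc g q, hf1.1.add hg1.1, ?_, ?_⟩
    · intro p hp
      beta_reduce
      rw [hUf p hp, hUg p hp, Quaternion.coe_mul_eq_smul, Quaternion.coe_add, add_smul]
      abel
    · intro p hp
      rw [fueterL_add f g p (hfd p hp) (hgd p hp), hf1.2.2 p hp, hg1.2.2 p hp,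
        ← Quaternion.coe_add]
      congr 1
      beta_reduce
      rw [show Vc f p + Vc g p = v₁ p + v₂ p from by
        rw [Vc_eq f u₁ v₁ p (hIm p hp) (hf1.2.1 p hp),
          Vc_eq g u₂ v₂ p (hIm p hp) (hg1.2.1 p hp)]]
      ring
  · -- inverse
    intro hne
    have hWne : ∀ p ∈ ω, Uc f p * Uc f p + Vc f p * Vc f p ≠ 0 := by
      intro p hp h0
      have hU0 : Uc f p = 0 := by nlinarith [sq_nonneg (Uc f p), sq_nonneg (Vc f p)]
      have hV0 : Vc f p = 0 := by nlinarith [sq_nonneg (Uc f p), sq_nonneg (Vc f p)]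
      apply hne p hp
      rw [hUf p hp, hU0, hV0]
      simp
    have hdec : ∀ p ∈ ω, (f p)⁻¹ =
        ((Uc f p * (Uc f p * Uc f p + Vc f p * Vc f p)⁻¹ : ℝ) : ℍ[ℝ])
          + (-(Vc f p) * (Uc f p * Uc f p + Vc f p * Vc f p)⁻¹) • iota p := by
      intro p hp
      have h1 : (((Uc f p * (Uc f p * Uc f p + Vc f p * Vc f p)⁻¹ : ℝ) : ℍ[ℝ])
          + (-(Vc f p) * (Uc f p * Uc f p + Vc f p * Vc f p)⁻¹) • iota p) * f p = 1 := by
        rw [hUf p hp, mul_decomp _ _ _ _ _ (hι p hp)]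
        have hac : Uc f p * (Uc f p * Uc f p + Vc f p * Vc f p)⁻¹ * Uc f p
            - -(Vc f p) * (Uc f p * Uc f p + Vc f p * Vc f p)⁻¹ * Vc f p = 1 := by
          rw [show Uc f p * (Uc f p * Uc f p + Vc f p * Vc f p)⁻¹ * Uc f p
            - -(Vc f p) * (Uc f p * Uc f p + Vc f p * Vc f p)⁻¹ * Vc f p
            = (Uc f p * Uc f p + Vc f p * Vc f p) * (Uc f p * Uc f p + Vc f p * Vc f p)⁻¹ by ring]
          exact mul_inv_cancel₀ (hWne p hp)
        have had : Uc f p * (Uc f p * Uc f p + Vc f p * Vc f p)⁻¹ * Vc f p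
            + -(Vc f p) * (Uc f p * Uc f p + Vc f p * Vc f p)⁻¹ * Uc f p = 0 := by ring
        rw [hac, had, Quaternion.coe_one, zero_smul, add_zero]
      exact (eq_inv_of_mul_eq_one_left h1).symm
    refine ⟨fun q => Uc f q * (Uc f q * Uc f q + Vc f q * Vc f q)⁻¹,
            fun q => -(Vc f q) * (Uc f q * Uc f q + Vc f q * Vc f q)⁻¹, ?_, ?_, ?_⟩
    · intro p hp
      have h1 : ContDiffAt ℝ 1 f p := (hf1.1 p hp).contDiffAt (hω.mem_nhds hp)
      have h2 : ContDiffAt ℝ 1 (fun q => (f q)⁻¹) p := by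
        have := (contDiffAt_ringInverse ℝ (Units.mk0 (f p) (hne p hp))).comp p h1
        simpa [Function.comp_def, Ring.inverse_eq_inv'] using this
      exact h2.contDiffWithinAt
    · intro p hp
      beta_reduce
      rw [hdec p hp, Quaternion.coe_mul_eq_smul]
    · intro p hp
      have hU1 := Uc_diffAt f p (hfd p hp)
      have hV1 := Vc_diffAt f p (hIm p hp) (hfd p hp)
      have hWd : DifferentiableAt ℝ (fun q => Uc f q * Uc f q + Vc f q * Vc f q) p :=
        (hU1.mul hU1).add (hV1.mul hV1)
      have hWinv : DifferentiableAt ℝ (fun q => (Uc f q * Uc f q + Vc f q * Vc f q)⁻¹) p :=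
        hWd.inv (hWne p hp)
      have hev : ∀ᶠ q in nhds p, (f q)⁻¹ =
          ((Uc f q * (Uc f q * Uc f q + Vc f q * Vc f q)⁻¹ : ℝ) : ℍ[ℝ])
            + (-(Vc f q) * (Uc f q * Uc f q + Vc f q * Vc f q)⁻¹) • iota q := by
        filter_upwards [hω.mem_nhds hp] with q hq
        exact hdec q hq
      rw [fueterL_decomp p (hIm p hp) _ _ (hU1.fun_mul hWinv) (hV1.fun_neg.fun_mul hWinv) _ hev]
      have hz : Dbar (fun q => Uc f q * (Uc f q * Uc f q + Vc f q * Vc f q)⁻¹) p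
          + Dbar (fun q => -(Vc f q) * (Uc f q * Uc f q + Vc f q * Vc f q)⁻¹) p * iota p
            = 0 := by
        rw [Dbar_mul _ _ p hU1 hWinv, Dbar_mul _ _ p hV1.fun_neg hWinv,
          Dbar_inv _ p hWd (hWne p hp),
          Dbar_add _ _ p (hU1.fun_mul hU1) (hV1.fun_mul hV1),
          Dbar_mul _ _ p hU1 hU1, Dbar_mul _ _ p hV1 hV1, Dbar_neg, e1 p hp]
        have hII := hι p hp
        have hw := hWne p hp
        set B := Dbar (Vc f) p with hB
        set I := iota p with hI
        set U := Uc f p with hU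
        set V := Vc f p with hV
        simp only [smul_neg, neg_smul, smul_add, smul_smul, add_mul, sub_mul, neg_mul,
          smul_mul_assoc, mul_assoc, hII, mul_neg_one, mul_one, neg_neg]
        match_scalars <;> field_simp [hw] <;> ring_nf
      rw [hz, zero_add]

end
end

section
/- Let f = u + ιv be a function of Class II on an open set ω ⊆ ℍ with ω ∩ ℝ = ∅, and define U(t,r,α,β) = u(t + r·ι(α,β)) and V(t,r,α,β) = v(t + r·ι(α,β)). Then at every (t,r,α,β) with t + r·ι(α,β) ∈ ω, r > 0 and sin β ≠ 0, the following spherical Cauchy–Riemann equations hold: (1/sin β)·∂V/∂α + ∂U/∂β = 0 and (1/sin β)·∂U/∂α − ∂V/∂β = 0. -/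
open Quaternion

noncomputable section

@[simp] lemma sph_re (a b : ℝ) : (sph a b).re = 0 := rfl
@[simp] lemma sph_imI (a b : ℝ) : (sph a b).imI = Real.cos a * Real.sin b := rfl
@[simp] lemma sph_imJ (a b : ℝ) : (sph a b).imJ = Real.sin a * Real.sin b := rfl
@[simp] lemma sph_imK (a b : ℝ) : (sph a b).imK = Real.cos b := rfl
@[simp] lemma sphA_re (a b : ℝ) : (sphA a b).re = 0 := rfl
@[simp] lemma sphA_imI (a b : ℝ) : (sphA a b).imI = -(Real.sin a * Real.sin b) := rfl
@[simp] lemma sphA_imJ (a b : ℝ) : (sphA a b).imJ = Real.cos a * Real.sin b := rfl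
@[simp] lemma sphA_imK (a b : ℝ) : (sphA a b).imK = 0 := rfl
@[simp] lemma sphB_re (a b : ℝ) : (sphB a b).re = 0 := rfl
@[simp] lemma sphB_imI (a b : ℝ) : (sphB a b).imI = Real.cos a * Real.cos b := rfl
@[simp] lemma sphB_imJ (a b : ℝ) : (sphB a b).imJ = Real.sin a * Real.cos b := rfl
@[simp] lemma sphB_imK (a b : ℝ) : (sphB a b).imK = -Real.sin b := rfl
@[simp] lemma qI_re_s9 : (qI).re = 0 := rfl
@[simp] lemma qI_imI_s9 : (qI).imI = 1 := rfl
@[simp] lemma qI_imJ_s9 : (qI).imJ = 0 := rfl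
@[simp] lemma qI_imK_s9 : (qI).imK = 0 := rfl
@[simp] lemma qJ_re_s9 : (qJ).re = 0 := rfl
@[simp] lemma qJ_imI_s9 : (qJ).imI = 0 := rfl
@[simp] lemma qJ_imJ_s9 : (qJ).imJ = 1 := rfl
@[simp] lemma qJ_imK_s9 : (qJ).imK = 0 := rfl
@[simp] lemma qK_re_s9 : (qK).re = 0 := rfl
@[simp] lemma qK_imI_s9 : (qK).imI = 0 := rfl
@[simp] lemma qK_imJ_s9 : (qK).imJ = 0 := rfl
@[simp] lemma qK_imK_s9 : (qK).imK = 1 := rfl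

lemma sph_mul_self (a b : ℝ) : sph a b * sph a b = -1 := by
  ext
  · simp [Quaternion.re_mul]
    nlinarith [Real.sin_sq_add_cos_sq a, Real.sin_sq_add_cos_sq b]
  · simp [Quaternion.imI_mul]; ring
  · simp [Quaternion.imJ_mul]; ring
  · simp [Quaternion.imK_mul]; ring

lemma norm_sph (a b : ℝ) : ‖sph a b‖ = 1 := by
  have h : Quaternion.normSq (sph a b) = 1 := by
    rw [Quaternion.normSq_def']
    simp
    nlinarith [Real.sin_sq_add_cos_sq a, Real.sin_sq_add_cos_sq b]
  have h2 : ‖sph a b‖ * ‖sph a b‖ = 1 := by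
    rw [← Quaternion.normSq_eq_norm_mul_self, h]
  rcases mul_self_eq_one_iff.mp h2 with h3 | h3
  · exact h3
  · nlinarith [norm_nonneg (sph a b)]

lemma smul_one_eq_coe (x : ℝ) : x • (1:ℍ[ℝ]) = (x : ℍ[ℝ]) := by ext <;> simp

lemma im_aux (t s a b : ℝ) : ((t : ℍ[ℝ]) + s • sph a b).im = s • sph a b := by
  ext <;> simp

lemma iota_aux (t s a b : ℝ) (hs : 0 < s) : iota ((t : ℍ[ℝ]) + s • sph a b) = sph a b := by
  rw [iota, im_aux, norm_smul, norm_sph, mul_one, Real.norm_eq_abs, abs_of_pos hs,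
    smul_smul, inv_mul_cancel₀ hs.ne', one_smul]

lemma hasDerivAt_sph_left (a b : ℝ) : HasDerivAt (fun s => sph s b) (sphA a b) a := by
  have h : (fun s => sph s b) = fun s =>
      (Real.cos s * Real.sin b) • qI + (Real.sin s * Real.sin b) • qJ + (Real.cos b) • qK := by
    funext s; ext <;> simp
  rw [h]
  have := ((((Real.hasDerivAt_cos a).mul_const (Real.sin b)).smul_const qI).add
    (((Real.hasDerivAt_sin a).mul_const (Real.sin b)).smul_const qJ)).add_const
    ((Real.cos b) • qK)
  exact this.congr_deriv (by ext <;> simp <;> ring)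

lemma hasDerivAt_sph_right (a b : ℝ) : HasDerivAt (fun s => sph a s) (sphB a b) b := by
  have h : (fun s => sph a s) = fun s =>
      (Real.cos a * Real.sin s) • qI + (Real.sin a * Real.sin s) • qJ + (Real.cos s) • qK := by
    funext s; ext <;> simp
  rw [h]
  have := ((((Real.hasDerivAt_sin b).const_mul (Real.cos a)).smul_const qI).add
    (((Real.hasDerivAt_sin b).const_mul (Real.sin a)).smul_const qJ)).add
    ((Real.hasDerivAt_cos b).smul_const qK)
  exact this.congr_deriv (by ext <;> simp <;> ring)


def reCLM : ℍ[ℝ] →L[ℝ] ℝ :=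
  { QuaternionAlgebra.reₗ (-1 : ℝ) (0 : ℝ) (-1 : ℝ) with cont := Quaternion.continuous_re }

lemma curve_deriv
    (ω : Set ℍ[ℝ]) (hω : IsOpen ω)
    (f : ℍ[ℝ] → ℍ[ℝ]) (u v : ℍ[ℝ] → ℝ)
    (hf1 : ContDiffOn ℝ 1 f ω)
    (hf2 : ∀ p ∈ ω, f p = (u p : ℍ[ℝ]) + (v p : ℍ[ℝ]) * iota p)
    (γ : ℝ → ℍ[ℝ]) (ισ : ℝ → ℍ[ℝ]) (s₀ : ℝ) (d dι : ℍ[ℝ])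
    (hγ : HasDerivAt γ d s₀) (hι : HasDerivAt ισ dι s₀)
    (hmem : γ s₀ ∈ ω)
    (hiota : ∀ᶠ s in nhds s₀, iota (γ s) = ισ s)
    (hre : ∀ s, (ισ s).re = 0)
    (hsq : ∀ s, ισ s * ισ s = -1) :
    HasDerivAt (fun s => u (γ s)) (fderiv ℝ f (γ s₀) d).re s₀ ∧
    HasDerivAt (fun s => v (γ s)) (-((fderiv ℝ f (γ s₀) d) * ισ s₀ + f (γ s₀) * dι).re) s₀ ∧
    fderiv ℝ f (γ s₀) d
      = ((fderiv ℝ f (γ s₀) d).re) • (1:ℍ[ℝ])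
        + (-((fderiv ℝ f (γ s₀) d) * ισ s₀ + f (γ s₀) * dι).re) • ισ s₀
        + (v (γ s₀)) • dι := by
  have hfd : DifferentiableAt ℝ f (γ s₀) :=
    (hf1.contDiffAt (hω.mem_nhds hmem)).differentiableAt one_ne_zero
  have hD : HasDerivAt (fun s => f (γ s)) (fderiv ℝ f (γ s₀) d) s₀ :=
    hfd.hasFDerivAt.comp_hasDerivAt s₀ hγ
  have hmem' : ∀ᶠ s in nhds s₀, γ s ∈ ω :=
    hγ.continuousAt.preimage_mem_nhds (hω.mem_nhds hmem)
  have hev : ∀ᶠ s in nhds s₀, f (γ s) = (u (γ s) : ℍ[ℝ]) + (v (γ s) : ℍ[ℝ]) * ισ s := by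
    filter_upwards [hmem', hiota] with s h1 h2
    rw [hf2 _ h1, h2]
  have hu_ev : (fun s => u (γ s)) =ᶠ[nhds s₀] fun s => (f (γ s)).re := by
    filter_upwards [hev] with s h
    rw [h]; simp [Quaternion.re_mul, hre s]
  have hv_ev : (fun s => v (γ s)) =ᶠ[nhds s₀] fun s => -((f (γ s)) * ισ s).re := by
    filter_upwards [hev] with s h
    rw [h, add_mul, mul_assoc, hsq s, mul_neg_one]
    simp [Quaternion.re_mul, hre s]
  have hUd : HasDerivAt (fun s => (f (γ s)).re) (fderiv ℝ f (γ s₀) d).re s₀ :=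
    (reCLM.hasFDerivAt.comp_hasDerivAt s₀ hD :)
  have hU : HasDerivAt (fun s => u (γ s)) (fderiv ℝ f (γ s₀) d).re s₀ :=
    hUd.congr_of_eventuallyEq hu_ev
  have hVd : HasDerivAt (fun s => -((f (γ s)) * ισ s).re)
      (-((fderiv ℝ f (γ s₀) d) * ισ s₀ + f (γ s₀) * dι).re) s₀ :=
    ((reCLM.hasFDerivAt.comp_hasDerivAt s₀ (hD.mul hι)) :
      HasDerivAt _ ((fderiv ℝ f (γ s₀) d * ισ s₀ + f (γ s₀) * dι).re) s₀).neg
  have hV : HasDerivAt (fun s => v (γ s))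
      (-((fderiv ℝ f (γ s₀) d) * ισ s₀ + f (γ s₀) * dι).re) s₀ :=
    hVd.congr_of_eventuallyEq hv_ev
  refine ⟨hU, hV, ?_⟩
  have hφ : HasDerivAt (fun s => u (γ s) • (1:ℍ[ℝ]) + v (γ s) • ισ s)
      ((fderiv ℝ f (γ s₀) d).re • (1:ℍ[ℝ])
        + (v (γ s₀) • dι + (-((fderiv ℝ f (γ s₀) d) * ισ s₀ + f (γ s₀) * dι).re) • ισ s₀)) s₀ :=
    (hU.smul_const (1:ℍ[ℝ])).add (hV.smul hι)
  have hφev : (fun s => u (γ s) • (1:ℍ[ℝ]) + v (γ s) • ισ s) =ᶠ[nhds s₀] fun s => f (γ s) := by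
    filter_upwards [hev] with s h
    rw [h]
    congr 1
    · ext <;> simp
    · exact (Quaternion.coe_mul_eq_smul _ _).symm
  have h3 : HasDerivAt (fun s => f (γ s))
      ((fderiv ℝ f (γ s₀) d).re • (1:ℍ[ℝ])
        + (v (γ s₀) • dι + (-((fderiv ℝ f (γ s₀) d) * ισ s₀ + f (γ s₀) * dι).re) • ισ s₀)) s₀ :=
    hφ.congr_of_eventuallyEq hφev.symm
  have := hD.unique h3
  exact this.trans (by abel)


set_option maxHeartbeats 1000000 in
/-- spherical Cauchy-Riemann equations for Class II functions. -/
theorem stmt9 (ω : Set ℍ[ℝ]) (hω : IsOpen ω) (hIm : ∀ p ∈ ω, p.im ≠ 0)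
    (f : ℍ[ℝ] → ℍ[ℝ]) (u v : ℍ[ℝ] → ℝ) (hf : IsClassIIWith f u v ω)
    (t r α β : ℝ) (hp : (t : ℍ[ℝ]) + r • sph α β ∈ ω) (hr : 0 < r)
    (hβ : Real.sin β ≠ 0) :
    (Real.sin β)⁻¹ * deriv (fun s : ℝ => v ((t : ℍ[ℝ]) + r • sph s β)) α
        + deriv (fun s : ℝ => u ((t : ℍ[ℝ]) + r • sph α s)) β = 0 ∧
    (Real.sin β)⁻¹ * deriv (fun s : ℝ => u ((t : ℍ[ℝ]) + r • sph s β)) α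
        - deriv (fun s : ℝ => v ((t : ℍ[ℝ]) + r • sph α s)) β = 0 := by
  obtain ⟨hC, hdec, hfu⟩ := hf
  have ha : Real.sin α ^ 2 + Real.cos α ^ 2 = 1 := Real.sin_sq_add_cos_sq α
  have hb : Real.sin β ^ 2 + Real.cos β ^ 2 = 1 := Real.sin_sq_add_cos_sq β
  -- the four curves
  have hγt : HasDerivAt (fun s : ℝ => ((s : ℍ[ℝ]) + r • sph α β)) 1 t := by
    have h0 : (fun s : ℝ => (s : ℍ[ℝ])) = fun s : ℝ => s • (1 : ℍ[ℝ]) := by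
      funext s; rw [smul_one_eq_coe]
    have h1 : HasDerivAt (fun s : ℝ => (s : ℍ[ℝ])) 1 t := by
      rw [h0]; simpa using (hasDerivAt_id t).smul_const (1 : ℍ[ℝ])
    exact h1.add_const (r • sph α β)
  have hγr : HasDerivAt (fun s : ℝ => ((t : ℍ[ℝ]) + s • sph α β)) (sph α β) r := by
    simpa using ((hasDerivAt_id r).smul_const (sph α β)).const_add ((t : ℍ[ℝ]))
  have hγa : HasDerivAt (fun s : ℝ => ((t : ℍ[ℝ]) + r • sph s β)) (r • sphA α β) α :=
    ((hasDerivAt_sph_left α β).const_smul r).const_add _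
  have hγb : HasDerivAt (fun s : ℝ => ((t : ℍ[ℝ]) + r • sph α s)) (r • sphB α β) β :=
    ((hasDerivAt_sph_right α β).const_smul r).const_add _
  -- apply the curve lemma to the four curves
  obtain ⟨hUt, hVt, hEt⟩ := curve_deriv ω hω f u v hC hdec
    (fun s : ℝ => ((s : ℍ[ℝ]) + r • sph α β)) (fun _ => sph α β) t 1 0
    hγt (hasDerivAt_const t (sph α β)) hp
    (Filter.Eventually.of_forall fun s => iota_aux s r α β hr)
    (fun _ => sph_re α β) (fun _ => sph_mul_self α β)
  obtain ⟨hUr, hVr, hEr⟩ := curve_deriv ω hω f u v hC hdec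
    (fun s : ℝ => ((t : ℍ[ℝ]) + s • sph α β)) (fun _ => sph α β) r (sph α β) 0
    hγr (hasDerivAt_const r (sph α β)) hp
    (by filter_upwards [eventually_gt_nhds hr] with s hs using iota_aux t s α β hs)
    (fun _ => sph_re α β) (fun _ => sph_mul_self α β)
  obtain ⟨hUa, hVa, hEa⟩ := curve_deriv ω hω f u v hC hdec
    (fun s : ℝ => ((t : ℍ[ℝ]) + r • sph s β)) (fun s => sph s β) α
    (r • sphA α β) (sphA α β)
    hγa (hasDerivAt_sph_left α β) hp
    (Filter.Eventually.of_forall fun s => iota_aux t r s β hr)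
    (fun s => sph_re s β) (fun s => sph_mul_self s β)
  obtain ⟨hUb, hVb, hEb⟩ := curve_deriv ω hω f u v hC hdec
    (fun s : ℝ => ((t : ℍ[ℝ]) + r • sph α s)) (fun s => sph α s) β
    (r • sphB α β) (sphB α β)
    hγb (hasDerivAt_sph_right α β) hp
    (Filter.Eventually.of_forall fun s => iota_aux t r α s hr)
    (fun s => sph_re α s) (fun s => sph_mul_self α s)
  beta_reduce at hUt hVt hEt hUr hVr hEr hUa hVa hEa hUb hVb hEb
  rw [hVa.deriv, hUb.deriv, hUa.deriv, hVb.deriv]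
  set p₀ : ℍ[ℝ] := (t : ℍ[ℝ]) + r • sph α β with hp₀
  set L : ℍ[ℝ] →L[ℝ] ℍ[ℝ] := fderiv ℝ f p₀ with hLdef
  set Ut : ℝ := (L 1).re with hUt'
  set Vt : ℝ := -(L 1 * sph α β + f p₀ * 0).re with hVt'
  set Ur : ℝ := (L (sph α β)).re with hUr'
  set Vr : ℝ := -(L (sph α β) * sph α β + f p₀ * 0).re with hVr'
  set Ua : ℝ := (L (r • sphA α β)).re with hUa'
  set Va : ℝ := -(L (r • sphA α β) * sph α β + f p₀ * sphA α β).re with hVa'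
  set Ub : ℝ := (L (r • sphB α β)).re with hUb'
  set Vb : ℝ := -(L (r • sphB α β) * sph α β + f p₀ * sphB α β).re with hVb'
  set w : ℝ := v p₀ with hw'
  -- basis change identities
  have id1 : (Real.sin β * r) • qI
      = (Real.cos α * Real.sin β ^ 2 * r) • sph α β
        + (Real.cos α * Real.cos β * Real.sin β) • (r • sphB α β)
        + (-Real.sin α) • (r • sphA α β) := by
    ext <;> simp
    · linear_combination (-(Real.sin β^3*r) - Real.cos β^2*Real.sin β*r)*ha
        + (-(Real.sin β*r) + Real.sin α^2*Real.sin β*r)*hb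
    · linear_combination (-(Real.cos α*Real.sin α*Real.sin β*r))*hb
    · ring
  have id2 : (Real.sin β * r) • qJ
      = (Real.sin α * Real.sin β ^ 2 * r) • sph α β
        + (Real.sin α * Real.cos β * Real.sin β) • (r • sphB α β)
        + (Real.cos α) • (r • sphA α β) := by
    ext <;> simp
    · linear_combination (-(Real.cos α*Real.sin α*Real.sin β*r))*hb
    · linear_combination (-(Real.sin β*r))*ha + (-(Real.sin α^2*Real.sin β*r))*hb
    · ring
  have id3 : r • qK
      = (Real.cos β * r) • sph α β + (-Real.sin β) • (r • sphB α β) := by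
    ext <;> simp
    · ring
    · ring
    · linear_combination (-r)*hb
  -- images under L
  have hLI : (Real.sin β * r) • L qI
      = (Real.cos α * Real.sin β ^ 2 * r) • L (sph α β)
        + (Real.cos α * Real.cos β * Real.sin β) • L (r • sphB α β)
        + (-Real.sin α) • L (r • sphA α β) := by
    have := congrArg (fun q => L q) id1
    simpa using this
  have hLJ : (Real.sin β * r) • L qJ
      = (Real.sin α * Real.sin β ^ 2 * r) • L (sph α β)
        + (Real.sin α * Real.cos β * Real.sin β) • L (r • sphB α β)
        + (Real.cos α) • L (r • sphA α β) := by
    have := congrArg (fun q => L q) id2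
    simpa using this
  have hLK : r • L qK
      = (Real.cos β * r) • L (sph α β) + (-Real.sin β) • L (r • sphB α β) := by
    have := congrArg (fun q => L q) id3
    simpa using this
  -- the Fueter equation, multiplied by sin β * r
  have hF : L 1 + qI * L qI + qJ * L qJ + qK * L qK
      = ((-2 * v p₀ / ‖p₀.im‖ : ℝ) : ℍ[ℝ]) := hfu p₀ hp
  clear_value p₀ L Ut Vt Ur Vr Ua Va Ub Vb w
  have hFc := congrArg (fun q : ℍ[ℝ] => (Real.sin β * r) • q) hF
  simp only [smul_add] at hFc
  rw [← mul_smul_comm (Real.sin β * r) qI (L qI),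
      ← mul_smul_comm (Real.sin β * r) qJ (L qJ), mul_smul (Real.sin β) r (qK * L qK),
      ← mul_smul_comm r qK (L qK), hLI, hLJ, hLK, hEt, hEr, hEa, hEb] at hFc
  rw [Quaternion.ext_iff] at hFc
  obtain ⟨-, hI, hJ, hK⟩ := hFc
  simp only [Quaternion.re_add, Quaternion.imI_add, Quaternion.imJ_add, Quaternion.imK_add,
    Quaternion.re_smul, Quaternion.imI_smul, Quaternion.imJ_smul, Quaternion.imK_smul,
    Quaternion.re_mul, Quaternion.imI_mul, Quaternion.imJ_mul, Quaternion.imK_mul,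
    Quaternion.re_one, Quaternion.imI_one, Quaternion.imJ_one, Quaternion.imK_one,
    Quaternion.re_coe, Quaternion.imI_coe, Quaternion.imJ_coe, Quaternion.imK_coe,
    Quaternion.re_zero, Quaternion.imI_zero, Quaternion.imJ_zero, Quaternion.imK_zero,
    sph_re, sph_imI, sph_imJ, sph_imK, sphA_re, sphA_imI, sphA_imJ, sphA_imK,
    sphB_re, sphB_imI, sphB_imJ, sphB_imK, qI_re_s9, qI_imI_s9, qI_imJ_s9, qI_imK_s9,
    qJ_re_s9, qJ_imI_s9, qJ_imJ_s9, qJ_imK_s9, qK_re_s9, qK_imI_s9, qK_imJ_s9, qK_imK_s9,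
    smul_eq_mul] at hI hJ hK
  have key1 : Va + Real.sin β * Ub = 0 := by
    linear_combination (Real.cos α * Real.cos β) * hI + (Real.sin α * Real.cos β) * hJ
      - Real.sin β * hK
      + (-(Real.sin β^2*Va) - Real.cos β*Real.sin β^2*r*Ur - Real.cos β*Real.sin β^2*r*Vt
          - Real.cos β^2*Va - Real.cos β^2*Real.sin β*Ub) * ha
      + (-Va - Real.sin β*Ub) * hb
  have key2 : Ua - Real.sin β * Vb = 0 := by
    linear_combination (-Real.sin α) * hI + Real.cos α * hJ
      + (-Ua + Real.sin β^3*Vb + Real.cos β^2*Real.sin β*Vb) * ha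
      + (Real.sin β*Vb) * hb
  constructor
  · field_simp
    linear_combination key1
  · field_simp
    linear_combination key2

end
end

section
/- On the open set ω = {p = t + xi + yj + zk ∈ ℍ : x > 0}, the function f(p) = (x/r(p))·ι(p) (i.e. u = 0 and v = x/r) is of Class I but is not of Class II. -/
open Quaternion

noncomputable section

namespace SAux
def cI : ℍ[ℝ] →L[ℝ] ℝ := { QuaternionAlgebra.imIₗ (-1:ℝ) 0 (-1) with cont := Quaternion.continuous_imI }
def cJ : ℍ[ℝ] →L[ℝ] ℝ := { QuaternionAlgebra.imJₗ (-1:ℝ) 0 (-1) with cont := Quaternion.continuous_imJ }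
def cK : ℍ[ℝ] →L[ℝ] ℝ := { QuaternionAlgebra.imKₗ (-1:ℝ) 0 (-1) with cont := Quaternion.continuous_imK }
@[simp] lemma cI_apply (p : ℍ[ℝ]) : cI p = p.imI := rfl
@[simp] lemma cJ_apply (p : ℍ[ℝ]) : cJ p = p.imJ := rfl
@[simp] lemma cK_apply (p : ℍ[ℝ]) : cK p = p.imK := rfl
def cim : ℍ[ℝ] →L[ℝ] ℍ[ℝ] :=
  { toFun := Quaternion.im
    map_add' := fun a b => by ext <;> simp
    map_smul' := fun r a => by ext <;> simp
    cont := Quaternion.continuous_im }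
@[simp] lemma cim_apply (p : ℍ[ℝ]) : cim p = p.im := rfl

def Qs (p : ℍ[ℝ]) : ℝ := p.imI * p.imI + p.imJ * p.imJ + p.imK * p.imK

lemma norm_im_sq (p : ℍ[ℝ]) : ‖p.im‖ ^ 2 = Qs p := by
  rw [sq, ← Quaternion.normSq_eq_norm_mul_self, Quaternion.normSq_def']
  simp [Qs, sq]

def g (p : ℍ[ℝ]) : ℍ[ℝ] := (p.imI * (Qs p)⁻¹) • p.im

lemma fderiv_g (p : ℍ[ℝ]) (hp : Qs p ≠ 0) :
    DifferentiableAt ℝ g p ∧ ∀ w : ℍ[ℝ], fderiv ℝ g p w =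
      (p.imI * (Qs p)⁻¹) • w.im +
      ((w.imI * Qs p - p.imI * (2*p.imI*w.imI + 2*p.imJ*w.imJ + 2*p.imK*w.imK)) / (Qs p)^2) • p.im := by
  have hI : HasFDerivAt (fun q : ℍ[ℝ] => q.imI) cI p := cI.hasFDerivAt
  have hJ : HasFDerivAt (fun q : ℍ[ℝ] => q.imJ) cJ p := cJ.hasFDerivAt
  have hK : HasFDerivAt (fun q : ℍ[ℝ] => q.imK) cK p := cK.hasFDerivAt
  have hQ : HasFDerivAt Qs ((p.imI • cI + p.imI • cI) + (p.imJ • cJ + p.imJ • cJ)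
      + (p.imK • cK + p.imK • cK)) p := ((hI.mul hI).add (hJ.mul hJ)).add (hK.mul hK)
  have hinv : HasFDerivAt (fun q : ℍ[ℝ] => (Qs q)⁻¹) _ p := (hasFDerivAt_inv hp).comp p hQ
  have hc : HasFDerivAt (fun q : ℍ[ℝ] => q.imI * (Qs q)⁻¹) _ p := hI.mul hinv
  have hg : HasFDerivAt g _ p := hc.smul cim.hasFDerivAt
  refine ⟨hg.differentiableAt, fun w => ?_⟩
  rw [hg.fderiv]
  simp only [ContinuousLinearMap.add_apply, ContinuousLinearMap.smul_apply,
    ContinuousLinearMap.smulRight_apply, ContinuousLinearMap.comp_apply,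
    ContinuousLinearMap.neg_apply, ContinuousLinearMap.mulLeftRight_apply,
    ContinuousLinearMap.one_apply, ContinuousLinearMap.toSpanSingleton_apply, cI_apply, cJ_apply, cK_apply, cim_apply, smul_eq_mul]
  congr 1
  congr 1
  field_simp
  ring

lemma feq : (fun p : ℍ[ℝ] => ((p.imI / ‖p.im‖ : ℝ) : ℍ[ℝ]) * iota p) = g := by
  funext p
  rw [iota, Quaternion.coe_mul_eq_smul, smul_smul, g]
  congr 1
  rcases eq_or_ne ‖p.im‖ 0 with h | h
  · have h0 : Qs p = 0 := by rw [← norm_im_sq, h]; ring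
    rw [h, h0]
    simp
  · have h2 : Qs p = ‖p.im‖ ^ 2 := (norm_im_sq p).symm
    rw [h2, sq, mul_inv, div_eq_mul_inv, mul_assoc]

lemma Qs_pos {p : ℍ[ℝ]} (hp : 0 < p.imI) : 0 < Qs p := by
  have h1 : 0 < p.imI * p.imI := mul_pos hp hp
  have h2 := mul_self_nonneg p.imJ
  have h3 := mul_self_nonneg p.imK
  simp only [Qs]
  linarith

lemma contDiffQs : ContDiff ℝ 1 Qs :=
  ((cI.contDiff.mul cI.contDiff).add (cJ.contDiff.mul cJ.contDiff)).add
    (cK.contDiff.mul cK.contDiff)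

end SAux
open SAux

/-- `f = (x/r) ι` is Class I but not Class II on `{x > 0}`. -/
theorem stmt10 :
    IsClassI (fun p : ℍ[ℝ] => ((p.imI / ‖p.im‖ : ℝ) : ℍ[ℝ]) * iota p)
        {p : ℍ[ℝ] | 0 < p.imI} ∧
    ¬ IsClassII (fun p : ℍ[ℝ] => ((p.imI / ‖p.im‖ : ℝ) : ℍ[ℝ]) * iota p)
        {p : ℍ[ℝ] | 0 < p.imI} := by
  rw [feq]
  constructor
  · refine ⟨?_, ?_, ?_⟩
    · intro p hp
      have hQ : Qs p ≠ 0 := (Qs_pos hp).ne'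
      exact ((cI.contDiff.contDiffAt.mul (contDiffQs.contDiffAt.inv hQ)).smul
        cim.contDiff.contDiffAt).contDiffWithinAt
    · intro p hp
      have hcomm : p.im * p = p * p.im := by
        have h := Quaternion.re_add_im p
        calc p.im * p = p.im * (↑p.re + p.im) := by rw [h]
          _ = (↑p.re + p.im) * p.im := by rw [mul_add, add_mul, Quaternion.coe_commutes]
          _ = p * p.im := by rw [h]
      rw [g, smul_mul_assoc, mul_smul_comm, hcomm]
    · intro p hp
      have hQ : Qs p ≠ 0 := (Qs_pos hp).ne'
      have hr : ‖p.im‖ ≠ 0 := by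
        intro h
        exact hQ (by rw [← norm_im_sq, h]; ring)
      have e := (fderiv_g p hQ).2
      have e1 : fderiv ℝ g p 1 = 0 := by
        rw [e 1]; simp
      have e2 : fderiv ℝ g p (iota p) = 0 := by
        rw [e (iota p), iota]
        simp only [Quaternion.imI_smul, Quaternion.imJ_smul, Quaternion.imK_smul,
          Quaternion.imI_im, Quaternion.imJ_im, Quaternion.imK_im, Quaternion.im_idem, Quaternion.im_smul,
          smul_eq_mul, smul_smul]
        rw [← add_smul]
        convert zero_smul ℝ p.im
        have hQr : Qs p = ‖p.im‖ ^ 2 := (norm_im_sq p).symm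
        have h2 : ‖p.im‖ ^ 2 = p.imI ^ 2 + p.imJ ^ 2 + p.imK ^ 2 := by
          rw [norm_im_sq]; simp only [Qs]; ring
        rw [hQr]
        field_simp
        linear_combination (2 * p.imI) * h2
      rw [e1, e2, mul_zero, add_zero]
  · rintro ⟨u, v, h1, h2, h3⟩
    have hmem : (qI + qJ) ∈ {p : ℍ[ℝ] | 0 < p.imI} := by
      rw [Set.mem_setOf_eq, Quaternion.imI_add]; simp [qI, qJ]
    have h := h3 _ hmem
    have hQ : Qs (qI + qJ) ≠ 0 := by
      simp only [Qs, Quaternion.imI_add, Quaternion.imJ_add, Quaternion.imK_add]; simp [qI, qJ]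
    have e := (fderiv_g (qI + qJ) hQ).2
    have hK : (fueterL g (qI + qJ)).imK = 1/2 := by
      rw [fueterL, e 1, e qI, e qJ, e qK]
      simp only [Qs, Quaternion.imI_add, Quaternion.imJ_add, Quaternion.imK_add, Quaternion.re_add,
        Quaternion.imK_mul, Quaternion.re_smul, Quaternion.imI_smul, Quaternion.imJ_smul, Quaternion.imK_smul,
        Quaternion.re_im, Quaternion.imI_im, Quaternion.imJ_im, Quaternion.imK_im,
        Quaternion.re_one, Quaternion.imI_one, Quaternion.imJ_one, Quaternion.imK_one]
      simp [Qs, qI, qJ, qK]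
      norm_num
    rw [h, Quaternion.imK_coe] at hK
    norm_num at hK
end
end

section
/- Let f = u + iv be holomorphic on an open subset Ω of the upper half plane {x + iy ∈ ℂ : y > 0}, and define L(f)(z) = (i/y)·f'(z) − i·v(z)/y² for z = x + iy ∈ Ω, where f' is the complex derivative of f. Then L(f) satisfies the Rinehart condition ∂(Lf)/∂x + i·∂(Lf)/∂y = 2·Im(L(f)(z))/y at every point z = x + iy ∈ Ω. -/
open Quaternion

noncomputable section

/-- The functional `L(f)(z) = (i/y) f'(z) - i v(z)/y²`. -/
def Lop (f : ℂ → ℂ) (w : ℂ) : ℂ :=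
  Complex.I / (w.im : ℂ) * deriv f w - Complex.I * ((f w).im : ℂ) / (w.im : ℂ) ^ 2

/-- `L(f)` satisfies the Rinehart condition for holomorphic `f`. -/
theorem stmt16 (Ω : Set ℂ) (hΩ : IsOpen Ω) (hup : ∀ z ∈ Ω, 0 < z.im)
    (f : ℂ → ℂ) (hf : DifferentiableOn ℂ f Ω) :
    ∀ z ∈ Ω,
      fderiv ℝ (Lop f) z 1 + Complex.I * fderiv ℝ (Lop f) z Complex.I
        = ((2 * (Lop f z).im / z.im : ℝ) : ℂ) := by
  intro z hz
  have hy0 : (0:ℝ) < z.im := hup z hz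
  have hyC : (z.im : ℂ) ≠ 0 := Complex.ofReal_ne_zero.2 hy0.ne'
  have hfa : AnalyticOnNhd ℂ f Ω := hf.analyticOnNhd hΩ
  set a := deriv f z with ha
  set b := deriv (deriv f) z with hb
  have hF : HasDerivAt f a z := ((hfa z hz).differentiableAt).hasDerivAt
  have hD : HasDerivAt (deriv f) b z := ((hfa.deriv z hz).differentiableAt).hasDerivAt
  have hFr : HasFDerivAt f
      ((ContinuousLinearMap.smulRight (1 : ℂ →L[ℂ] ℂ) a).restrictScalars ℝ) z :=
    (hF.hasFDerivAt).restrictScalars ℝ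
  have hDr : HasFDerivAt (deriv f)
      ((ContinuousLinearMap.smulRight (1 : ℂ →L[ℂ] ℂ) b).restrictScalars ℝ) z :=
    (hD.hasFDerivAt).restrictScalars ℝ
  set Lim : ℂ →L[ℝ] ℂ := Complex.ofRealCLM.comp Complex.imCLM with hLim
  have hIm : HasFDerivAt (fun w : ℂ => (w.im : ℂ)) Lim z := Lim.hasFDerivAt
  have hV : HasFDerivAt (fun w => ((f w).im : ℂ))
      (Lim.comp ((ContinuousLinearMap.smulRight (1 : ℂ →L[ℂ] ℂ) a).restrictScalars ℝ)) z :=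
    Lim.hasFDerivAt.comp z hFr
  have hInv : HasFDerivAt (fun w : ℂ => ((w.im : ℂ))⁻¹)
      ((-(ContinuousLinearMap.mulLeftRight ℝ ℂ ((z.im:ℂ))⁻¹ ((z.im:ℂ))⁻¹)).comp Lim) z :=
    (hasFDerivAt_inv' hyC).comp z hIm
  have hSqne : (z.im:ℂ) * (z.im:ℂ) ≠ 0 := mul_ne_zero hyC hyC
  have hSq : HasFDerivAt (fun w : ℂ => (w.im:ℂ) * (w.im:ℂ))
      ((z.im:ℂ) • Lim + (z.im:ℂ) • Lim) z := hIm.mul hIm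
  have hInv2 : HasFDerivAt (fun w : ℂ => ((w.im:ℂ) * (w.im:ℂ))⁻¹)
      ((-(ContinuousLinearMap.mulLeftRight ℝ ℂ ((z.im:ℂ)*(z.im:ℂ))⁻¹ ((z.im:ℂ)*(z.im:ℂ))⁻¹)).comp
        ((z.im:ℂ) • Lim + (z.im:ℂ) • Lim)) z :=
    (hasFDerivAt_inv' hSqne).comp z hSq
  have hG1 := (hInv.mul hDr).const_mul Complex.I
  have hG2 := (hV.const_mul Complex.I).mul hInv2
  have heq : Lop f = fun w => Complex.I * (((w.im:ℂ))⁻¹ * deriv f w) -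
      (Complex.I * ((f w).im:ℂ)) * ((w.im:ℂ) * (w.im:ℂ))⁻¹ := by
    funext w
    simp only [Lop]
    ring
  have hLd := (hG1.sub hG2).congr_of_eventuallyEq
    (Filter.Eventually.of_forall (fun w => congrFun heq w) : Lop f =ᶠ[nhds z] _)
  rw [hLd.fderiv]
  have him1 : (a * 1).im = a.im := by simp
  have himI : (a * Complex.I).im = a.re := by simp
  simp only [ContinuousLinearMap.sub_apply, ContinuousLinearMap.add_apply,
    ContinuousLinearMap.smul_apply, ContinuousLinearMap.comp_apply,
    ContinuousLinearMap.neg_apply, ContinuousLinearMap.smulRight_apply,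
    ContinuousLinearMap.one_apply, ContinuousLinearMap.coe_restrictScalars',
    ContinuousLinearMap.mulLeftRight_apply, hLim, Complex.ofRealCLM_apply,
    Complex.imCLM_apply, Complex.one_im, Complex.I_im, smul_eq_mul, him1, himI]
  have hv : (Lop f z).im = a.re / z.im - (f z).im / z.im ^ 2 := by
    simp only [Lop, ← ha, ← Complex.ofReal_pow, Complex.sub_im, Complex.div_im, Complex.div_re,
      Complex.mul_im, Complex.mul_re, Complex.I_re, Complex.I_im, Complex.ofReal_re,
      Complex.ofReal_im, Complex.normSq_ofReal]
    field_simp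
    ring
  rw [hv]
  simp only [← ha, ← hb, ← Complex.ofReal_inv]
  rw [Complex.ext_iff]
  constructor <;>
  · simp only [one_mul, Complex.mul_im, Complex.mul_re, Complex.I_re, Complex.I_im,
      Complex.ofReal_re, Complex.ofReal_im, Complex.add_re, Complex.add_im, Complex.sub_re,
      Complex.sub_im, Complex.neg_re, Complex.neg_im, Complex.inv_re, Complex.inv_im,
      Complex.normSq_mul, Complex.normSq_ofReal, Complex.ofReal_zero, Complex.ofReal_one,
      Complex.one_re, Complex.one_im, Complex.zero_re, Complex.zero_im]
    field_simp
    ring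

end
end
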